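/- Let S and S′ be coloring strings, and let (w₁, w₂, w₃) and (w₁′, w₂′, w₃′) be triples of pairwise distinct characters from {1,2,3} such that the concatenations w₁w₂w₃S and w₁′w₂′w₃′S′ are again coloring strings. If S and S′ are reconfigurable, then w₁w₂w₃S and w₁′w₂′w₃′S′ are also reconfigurable. -/

import Mathlib

/-- A coloring string: a string over the alphabet `{1,2,3}` (modeled as `Fin 3`)
in which consecutive characters are distinct; it encodes a proper 3-coloring of
a path. -/
def IsColoringString (S : List (Fin 3)) : Prop := S.Chain' (· ≠ ·)

/-- Two coloring strings are adjacent: one is obtained from the other by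
exchanging a swappable pair of consecutive characters (i.e. the exchange yields
again a coloring string). -/
def StringStep (S S' : List (Fin 3)) : Prop :=
  IsColoringString S ∧ IsColoringString S' ∧
    ∃ (A B : List (Fin 3)) (a b : Fin 3),
      S = A ++ a :: b :: B ∧ S' = A ++ b :: a :: B

/-- Two coloring strings are reconfigurable: they are joined by a sequence of
coloring strings in which consecutive strings are adjacent. -/
def StringReconf : List (Fin 3) → List (Fin 3) → Prop :=
  Relation.ReflTransGen StringStep

/- ----------------- auxiliary development ----------------- -/

abbrev Triple := Fin 3 × Fin 3 × Fin 3

def cons3 (p : Triple) (T : List (Fin 3)) : List (Fin 3) :=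
  p.1 :: p.2.1 :: p.2.2 :: T

/-- validity of a permutation prefix relative to the head of the suffix -/
def PValid (p : Triple) (t : Option (Fin 3)) : Prop :=
  p.1 ≠ p.2.1 ∧ p.2.1 ≠ p.2.2 ∧ p.1 ≠ p.2.2 ∧ t ≠ some p.2.2

instance : ∀ p t, Decidable (PValid p t) := fun _ _ => by
  unfold PValid; infer_instance

def PStep (t : Option (Fin 3)) (p q : Triple) : Prop :=
  PValid p t ∧ PValid q t ∧
    (q = (p.2.1, p.1, p.2.2) ∨ q = (p.1, p.2.2, p.2.1))

instance : ∀ t p q, Decidable (PStep t p q) := fun _ _ _ => by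
  unfold PStep; infer_instance

def PE (t : Option (Fin 3)) (p q : Triple) : Prop := p = q ∨ PStep t p q

instance : ∀ t p q, Decidable (PE t p q) := fun _ _ _ => by
  unfold PE; infer_instance

def PReach (t : Option (Fin 3)) (p q : Triple) : Prop :=
  ∃ r s : Triple, PE t p r ∧ PE t r s ∧ PE t s q

instance : ∀ t p q, Decidable (PReach t p q) := fun _ _ _ => by
  unfold PReach; infer_instance

lemma reach_lemma : ∀ (t : Option (Fin 3)) (p q : Triple),
    PValid p t → PValid q t → PReach t p q := by decide

lemma common_prefix : ∀ (t t' : Option (Fin 3)), ∃ p : Triple,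
    PValid p t ∧ PValid p t' := by decide

lemma coloring_cons3 (p : Triple) (T : List (Fin 3)) :
    IsColoringString (cons3 p T) ↔
      (p.1 ≠ p.2.1 ∧ p.2.1 ≠ p.2.2 ∧ T.head? ≠ some p.2.2) ∧
        T.Chain' (· ≠ ·) := by
  cases T with
  | nil => simp [IsColoringString, cons3, List.Chain', List.isChain_cons_cons]
  | cons t T' =>
      simp [IsColoringString, cons3, List.Chain', List.isChain_cons_cons]
      constructor
      · rintro ⟨h1, h2, h3, h4⟩
        exact ⟨⟨h1, h2, fun h => h3 h.symm⟩, h4⟩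
      · rintro ⟨⟨h1, h2, h3⟩, h4⟩
        exact ⟨h1, h2, fun h => h3 h.symm, h4⟩

lemma coloring_of_valid {p : Triple} {T : List (Fin 3)}
    (hp : PValid p T.head?) (hT : T.Chain' (· ≠ ·)) :
    IsColoringString (cons3 p T) :=
  (coloring_cons3 p T).2 ⟨⟨hp.1, hp.2.1, hp.2.2.2⟩, hT⟩

lemma pstep_to_step {T : List (Fin 3)} (hT : T.Chain' (· ≠ ·))
    {p q : Triple} (h : PStep T.head? p q) :
    StringStep (cons3 p T) (cons3 q T) := by
  obtain ⟨hp, hq, hd⟩ := h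
  have hcp := coloring_of_valid hp hT
  have hcq := coloring_of_valid hq hT
  rcases hd with rfl | rfl
  · exact ⟨hcp, hcq, [], p.2.2 :: T, p.1, p.2.1, rfl, rfl⟩
  · exact ⟨hcp, hcq, [p.1], T, p.2.1, p.2.2, rfl, rfl⟩

lemma pe_to_reconf {T : List (Fin 3)} (hT : T.Chain' (· ≠ ·))
    {p q : Triple} (h : PE T.head? p q) :
    StringReconf (cons3 p T) (cons3 q T) := by
  rcases h with rfl | h
  · exact Relation.ReflTransGen.refl
  · exact Relation.ReflTransGen.single (pstep_to_step hT h)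

lemma mobility {T : List (Fin 3)} (hT : T.Chain' (· ≠ ·))
    {p q : Triple} (hp : PValid p T.head?) (hq : PValid q T.head?) :
    StringReconf (cons3 p T) (cons3 q T) := by
  obtain ⟨r, s, h1, h2, h3⟩ := reach_lemma T.head? p q hp hq
  exact ((pe_to_reconf hT h1).trans (pe_to_reconf hT h2)).trans
    (pe_to_reconf hT h3)

lemma lift_step {T U : List (Fin 3)} (p : Triple) (h : StringStep T U)
    (hT : IsColoringString (cons3 p T)) (hU : IsColoringString (cons3 p U)) :
    StringStep (cons3 p T) (cons3 p U) := by
  obtain ⟨_, _, A, B, a, b, rfl, rfl⟩ := h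
  exact ⟨hT, hU, p.1 :: p.2.1 :: p.2.2 :: A, B, a, b, rfl, rfl⟩

lemma chain'_of_step_left {T U : List (Fin 3)} (h : StringStep T U) :
    T.Chain' (· ≠ ·) := h.1

lemma chain'_of_step_right {T U : List (Fin 3)} (h : StringStep T U) :
    U.Chain' (· ≠ ·) := h.2.1

lemma main_aux {S T : List (Fin 3)} (h : StringReconf S T) :
    ∀ p q : Triple, PValid p S.head? → PValid q T.head? →
      S.Chain' (· ≠ ·) → StringReconf (cons3 p S) (cons3 q T) := by
  induction h with
  | refl => exact fun p q hp hq hS => mobility hS hp hq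
  | @tail T U hST hTU ih =>
      intro p q hp hq hS
      have hT : T.Chain' (· ≠ ·) := chain'_of_step_left hTU
      have hU : U.Chain' (· ≠ ·) := chain'_of_step_right hTU
      obtain ⟨r, hr1, hr2⟩ := common_prefix T.head? U.head?
      have step1 : StringReconf (cons3 p S) (cons3 r T) := ih p r hp hr1 hS
      have step2 : StringStep (cons3 r T) (cons3 r U) :=
        lift_step r hTU (coloring_of_valid hr1 hT) (coloring_of_valid hr2 hU)
      have step3 : StringReconf (cons3 r U) (cons3 q U) := mobility hU hr2 hq
      exact (step1.tail step2).trans step3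

/-- prepending pairwise-distinct triples preserves
reconfigurability of coloring strings. -/
theorem stmt_10 (S S' : List (Fin 3)) (w₁ w₂ w₃ w₁' w₂' w₃' : Fin 3)
    (hw12 : w₁ ≠ w₂) (hw23 : w₂ ≠ w₃) (hw13 : w₁ ≠ w₃)
    (hw12' : w₁' ≠ w₂') (hw23' : w₂' ≠ w₃') (hw13' : w₁' ≠ w₃')
    (hS : IsColoringString (w₁ :: w₂ :: w₃ :: S))
    (hS' : IsColoringString (w₁' :: w₂' :: w₃' :: S'))
    (h : StringReconf S S') :
    StringReconf (w₁ :: w₂ :: w₃ :: S) (w₁' :: w₂' :: w₃' :: S') := by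
  have h1 := (coloring_cons3 (w₁, w₂, w₃) S).1 hS
  have h2 := (coloring_cons3 (w₁', w₂', w₃') S').1 hS'
  exact main_aux h (w₁, w₂, w₃) (w₁', w₂', w₃')
    ⟨h1.1.1, h1.1.2.1, hw13, h1.1.2.2⟩
    ⟨h2.1.1, h2.1.2.1, hw13', h2.1.2.2⟩ h1.2
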